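/- Let g : ω → ω be an injective computable function, and define permutations of ℤ × ω: σ(⟨x,n⟩) = ⟨x+1,n⟩; τ consisting of the 2-cycles (⟨0,3t+1⟩, ⟨0,3t+2⟩) for each t; and β consisting of the 2-cycles (⟨g(t),3t⟩, ⟨g(t),3t+1⟩) for each t. Writing β_x = σ^x β σ^{−x} and τ_x = σ^x τ σ^{−x}, the following hold for all integers x, y: [β_x, β_y] = 1 and [τ_x, τ_y] = 1; moreover for x ∈ ω, the commutator [σ^x β σ^{−x}, τ] = 1 if and only if x is not in the range of g. -/

import Mathlib

open scoped commutatorElement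
theorem stmt17 (g : ℕ → ℕ) (hg : Function.Injective g) (hgc : Computable g)
    (σ τ β : Equiv.Perm (ℤ × ℕ))
    -- σ is the shift to the next column
    (hσ : ∀ (z : ℤ) (n : ℕ), σ (z, n) = (z + 1, n))
    -- τ consists of the 2-cycles (⟨0,3t+1⟩, ⟨0,3t+2⟩)
    (hτ1 : ∀ t : ℕ, τ (0, 3 * t + 1) = (0, 3 * t + 2))
    (hτ2 : ∀ t : ℕ, τ (0, 3 * t + 2) = (0, 3 * t + 1))
    (hτ : ∀ (z : ℤ) (n : ℕ),
      (¬ ∃ t : ℕ, z = 0 ∧ (n = 3 * t + 1 ∨ n = 3 * t + 2)) → τ (z, n) = (z, n))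
    -- β consists of the 2-cycles (⟨g t, 3t⟩, ⟨g t, 3t+1⟩)
    (hβ1 : ∀ t : ℕ, β ((g t : ℤ), 3 * t) = ((g t : ℤ), 3 * t + 1))
    (hβ2 : ∀ t : ℕ, β ((g t : ℤ), 3 * t + 1) = ((g t : ℤ), 3 * t))
    (hβ : ∀ (z : ℤ) (n : ℕ),
      (¬ ∃ t : ℕ, z = (g t : ℤ) ∧ (n = 3 * t ∨ n = 3 * t + 1)) → β (z, n) = (z, n)) :
    -- with β_x = σ^x β σ^{-x} and τ_x = σ^x τ σ^{-x} (words read left-to-right,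
    -- so as functions `β_x = fun s => σ^{-x} (β (σ^x s))`):
    let βx : ℤ → Equiv.Perm (ℤ × ℕ) := fun x => σ ^ (-x) * β * σ ^ x
    let τx : ℤ → Equiv.Perm (ℤ × ℕ) := fun x => σ ^ (-x) * τ * σ ^ x
    (∀ x y : ℤ, ⁅βx x, βx y⁆ = 1) ∧
    (∀ x y : ℤ, ⁅τx x, τx y⁆ = 1) ∧
    (∀ x : ℕ, ⁅βx (x : ℤ), τ⁆ = 1 ↔ x ∉ Set.range g) := by
  intro βx τx
  -- action of natural powers of σ
  have hσn : ∀ (k : ℕ) (z : ℤ) (n : ℕ), (σ ^ k) (z, n) = (z + k, n) := by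
    intro k
    induction k with
    | zero => intro z n; simp
    | succ k ih =>
      intro z n
      rw [pow_succ, Equiv.Perm.mul_apply, hσ, ih]
      congr 1
      push_cast
      ring
  -- action of integer powers of σ
  have hσz : ∀ (k : ℤ) (z : ℤ) (n : ℕ), (σ ^ k) (z, n) = (z + k, n) := by
    intro k z n
    cases k with
    | ofNat m => simpa using hσn m z n
    | negSucc m =>
      rw [zpow_negSucc]
      apply (σ ^ (m + 1)).injective
      rw [Equiv.Perm.inv_def, Equiv.apply_symm_apply, hσn]
      congr 1
      push_cast [Int.negSucc_eq]
      ring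
  -- if βx x moves a point, there is a witness t
  have hBmove : ∀ (x z : ℤ) (n : ℕ), βx x (z, n) ≠ (z, n) →
      ∃ t : ℕ, z + x = (g t : ℤ) ∧ (n = 3 * t ∨ n = 3 * t + 1) := by
    intro x z n h
    by_contra hc
    apply h
    show (σ ^ (-x) * β * σ ^ x) (z, n) = (z, n)
    rw [Equiv.Perm.mul_apply, Equiv.Perm.mul_apply, hσz x z n, hβ _ _ hc,
      hσz (-x) (z + x) n]
    congr 1
    ring
  -- if τx x moves a point, the point is in column -x
  have hTmove : ∀ (x z : ℤ) (n : ℕ), τx x (z, n) ≠ (z, n) →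
      ∃ t : ℕ, z + x = 0 ∧ (n = 3 * t + 1 ∨ n = 3 * t + 2) := by
    intro x z n h
    by_contra hc
    apply h
    show (σ ^ (-x) * τ * σ ^ x) (z, n) = (z, n)
    rw [Equiv.Perm.mul_apply, Equiv.Perm.mul_apply, hσz x z n, hτ _ _ hc,
      hσz (-x) (z + x) n]
    congr 1
    ring
  refine ⟨?_, ?_, ?_⟩
  · -- β's commute
    intro x y
    rcases eq_or_ne x y with rfl | hxy
    · rw [commutatorElement_eq_one_iff_commute]
      exact Commute.refl _
    · rw [commutatorElement_eq_one_iff_commute]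
      apply Equiv.Perm.Disjoint.commute
      rintro ⟨z, n⟩
      by_contra hc
      push_neg at hc
      obtain ⟨h1, h2⟩ := hc
      obtain ⟨t, ht, htn⟩ := hBmove x z n h1
      obtain ⟨t', ht', htn'⟩ := hBmove y z n h2
      have : t = t' := by omega
      subst this
      exact hxy (by omega)
  · -- τ's commute
    intro x y
    rcases eq_or_ne x y with rfl | hxy
    · rw [commutatorElement_eq_one_iff_commute]
      exact Commute.refl _
    · rw [commutatorElement_eq_one_iff_commute]
      apply Equiv.Perm.Disjoint.commute
      rintro ⟨z, n⟩
      by_contra hc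
      push_neg at hc
      obtain ⟨h1, h2⟩ := hc
      obtain ⟨t, ht, _⟩ := hTmove x z n h1
      obtain ⟨t', ht', _⟩ := hTmove y z n h2
      exact hxy (by omega)
  · intro x
    rw [commutatorElement_eq_one_iff_commute]
    constructor
    · intro hcomm hmem
      obtain ⟨t, ht⟩ := hmem
      -- apply both sides to (0, 3t+1)
      have hEq := hcomm.eq
      have happ := congrArg (fun f : Equiv.Perm (ℤ × ℕ) => f ((0 : ℤ), 3 * t + 1)) hEq
      simp only [Equiv.Perm.mul_apply] at happ
      -- compute τ (0, 3t+1) = (0, 3t+2)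
      rw [hτ1 t] at happ
      -- compute βx x (0, 3t+2) : fixed
      have hfix2 : β ((x : ℤ), 3 * t + 2) = ((x : ℤ), 3 * t + 2) := by
        apply hβ
        rintro ⟨t', _, h | h⟩ <;> omega
      have hb2 : βx (x : ℤ) ((0 : ℤ), 3 * t + 2) = ((0 : ℤ), 3 * t + 2) := by
        show (σ ^ (-(x : ℤ)) * β * σ ^ (x : ℤ)) ((0 : ℤ), 3 * t + 2) = _
        rw [Equiv.Perm.mul_apply, Equiv.Perm.mul_apply, hσz (x : ℤ) 0 (3 * t + 2)]
        rw [show (0 : ℤ) + (x : ℤ) = (x : ℤ) by ring, hfix2,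
          hσz (-(x : ℤ)) (x : ℤ) (3 * t + 2)]
        congr 1
        ring
      -- compute βx x (0, 3t+1) = (0, 3t)
      have hb1 : βx (x : ℤ) ((0 : ℤ), 3 * t + 1) = ((0 : ℤ), 3 * t) := by
        show (σ ^ (-(x : ℤ)) * β * σ ^ (x : ℤ)) ((0 : ℤ), 3 * t + 1) = _
        rw [Equiv.Perm.mul_apply, Equiv.Perm.mul_apply, hσz (x : ℤ) 0 (3 * t + 1)]
        rw [show (0 : ℤ) + (x : ℤ) = ((g t : ℕ) : ℤ) by rw [ht]; ring, hβ2 t,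
          hσz (-(x : ℤ)) ((g t : ℕ) : ℤ) (3 * t)]
        rw [ht]
        congr 1
        ring
      rw [hb2, hb1] at happ
      -- τ (0, 3t) = (0, 3t)
      have hfix3 : τ ((0 : ℤ), 3 * t) = ((0 : ℤ), 3 * t) := by
        apply hτ
        rintro ⟨t', _, h | h⟩ <;> omega
      rw [hfix3] at happ
      have := (Prod.mk.injEq _ _ _ _).mp happ
      omega
    · intro hx
      apply Equiv.Perm.Disjoint.commute
      rintro ⟨z, n⟩
      by_contra hc
      push_neg at hc
      obtain ⟨h1, h2⟩ := hc
      obtain ⟨t, ht, _⟩ := hBmove (x : ℤ) z n h1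
      have h2' : τ (z, n) ≠ (z, n) := h2
      have hz : z = 0 ∧ ∃ t' : ℕ, n = 3 * t' + 1 ∨ n = 3 * t' + 2 := by
        by_contra hcc
        apply h2'
        apply hτ
        rintro ⟨t', hz0, hn⟩
        exact hcc ⟨hz0, ⟨t', hn⟩⟩
      obtain ⟨hz0, _⟩ := hz
      apply hx
      refine ⟨t, ?_⟩
      have : (g t : ℤ) = (x : ℤ) := by omega
      exact_mod_cast this
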